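/- 0-stability of Euler's method (Lemma 5): under the setup below, for any two sequences of {0,1}^n-valued random variables (Yᵢ) and (Zᵢ) adapted to the filtration (Fᵢ) with Y₀ = Z₀, and for every i ≥ 1, E[‖Yᵢ − Zᵢ‖₁] ≤ K · max_{1≤j≤i} E[‖D(Yⱼ, Yⱼ₋₁, Aⱼ) − D(Zⱼ, Zⱼ₋₁, Aⱼ)‖₁], where K = (e^{LT} − 1)/L and T = i·h. -/

import Mathlib

open MeasureTheory ProbabilityTheory Real

/-- View a Boolean infection state as a real number (`true ↦ 1`, `false ↦ 0`). -/
def boolToR (b : Bool) : ℝ := if b then 1 else 0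

/-- The difference operator `D(x', x, a) = (x' - x)/h - f(x, a)`, a vector in `ℝ^n`. -/
noncomputable def eulerD {n : ℕ} {α : Type*} (h : ℝ)
    (f : (Fin n → Bool) → α → Fin n → ℝ)
    (x' x : Fin n → Bool) (a : α) : Fin n → ℝ := fun p =>
  (boolToR (x' p) - boolToR (x p)) / h - f x a p

set_option linter.unusedSectionVars false
set_option maxHeartbeats 1000000

section Aux

variable {Ω : Type*} [MeasureSpace Ω] [IsProbabilityMeasure (ℙ : Measure Ω)]
  {κ : Type*} [Fintype κ] [DecidableEq κ] [MeasurableSpace κ] [MeasurableSingletonClass κ]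

lemma aux_pointwise (W : Ω → κ) (φ : κ → Ω → ℝ) (ω : Ω) :
    φ (W ω) ω = ∑ w : κ, (if W ω = w then (1:ℝ) else 0) * φ w ω := by
  rw [Finset.sum_eq_single (W ω)]
  · simp
  · intro b _ hb
    rw [if_neg (fun hc => hb hc.symm), zero_mul]
  · intro hmem; exact (hmem (Finset.mem_univ _)).elim

lemma aux_ind_integrable (W : Ω → κ) (hW : Measurable W) (w : κ) {v : Ω → ℝ}
    (hv : Integrable v ℙ) :
    Integrable (fun ω => (if W ω = w then (1:ℝ) else 0) * v ω) ℙ := by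
  refine hv.bdd_mul (c := 1) ?_ (ae_of_all _ fun ω => ?_)
  · exact ((measurable_const.ite (hW (measurableSet_singleton w)) measurable_const)
      : Measurable fun ω => if W ω = w then (1:ℝ) else 0).aestronglyMeasurable
  · by_cases hc : W ω = w <;> simp [hc]

lemma aux_decomp_integrable (W : Ω → κ) (hW : Measurable W) (φ : κ → Ω → ℝ)
    (hint : ∀ w, Integrable (φ w) ℙ) :
    Integrable (fun ω => φ (W ω) ω) ℙ := by
  have hfun : (fun ω => φ (W ω) ω)
      = fun ω => ∑ w : κ, (if W ω = w then (1:ℝ) else 0) * φ w ω :=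
    funext fun ω => aux_pointwise W φ ω
  rw [hfun]
  exact integrable_finset_sum _ fun w _ => aux_ind_integrable W hW w (hint w)

lemma aux_decomp_integral (W : Ω → κ) (hW : Measurable W) (φ : κ → Ω → ℝ)
    (hint : ∀ w, Integrable (φ w) ℙ) :
    ∫ ω, φ (W ω) ω ∂ℙ
      = ∑ w : κ, ∫ ω, (if W ω = w then (1:ℝ) else 0) * φ w ω ∂ℙ := by
  simp_rw [aux_pointwise W φ]
  exact integral_finset_sum _ fun w _ => aux_ind_integrable W hW w (hint w)

lemma aux_ind_eval (W : Ω → κ) (hW : Measurable W) (w : κ) :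
    ∫ ω, (if W ω = w then (1:ℝ) else 0) ∂ℙ = (ℙ (W ⁻¹' {w})).toReal := by
  have : (fun ω => if W ω = w then (1:ℝ) else 0)
      = Set.indicator (W ⁻¹' {w}) (fun _ => (1:ℝ)) := by
    funext ω
    by_cases hc : W ω = w <;> simp [Set.indicator_apply, Set.mem_preimage, hc]
  rw [this, integral_indicator_const _ (hW (measurableSet_singleton w))]
  simp
  rfl

lemma aux_ind_integral (W : Ω → κ) (hW : Measurable W) (w : κ) {v : Ω → ℝ}
    (hv : AEStronglyMeasurable v ℙ) (hindep : IndepFun W v ℙ) :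
    ∫ ω, (if W ω = w then (1:ℝ) else 0) * v ω ∂ℙ
      = (ℙ (W ⁻¹' {w})).toReal * ∫ ω, v ω ∂ℙ := by
  have hg : Measurable (fun x : κ => if x = w then (1:ℝ) else 0) :=
    measurable_of_countable _
  have hiu : IndepFun (fun ω => if W ω = w then (1:ℝ) else 0) v ℙ := by
    have := hindep.comp hg measurable_id
    exact this
  have hu : AEStronglyMeasurable (fun ω => if W ω = w then (1:ℝ) else 0) ℙ :=
    ((hg.comp hW) : Measurable fun ω => if W ω = w then (1:ℝ) else 0).aestronglyMeasurable
  rw [hiu.integral_fun_mul_eq_mul_integral hu hv, aux_ind_eval W hW w]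

end Aux

/-- **Lemma 5 (0-stability of Euler's method).** Let `(Aᵢ)_{i≥1}` be an i.i.d. sequence of
`α`-valued random variables with natural filtration `(Fᵢ)` (so `Fᵢ = σ(A₁, …, Aᵢ)`), and let
`f : {0,1}ⁿ × α → ℝⁿ` be measurable in its second argument, integrable against `A₁`, and
satisfy the expected Lipschitz condition `E[‖f(x,A₁) - f(z,A₁)‖₁] ≤ L * ‖x - z‖₁`.
Then for any two sequences `(Yᵢ)`, `(Zᵢ)` of `{0,1}ⁿ`-valued random variables adapted to
`(Fᵢ)` with `Y₀ = Z₀` and every `i ≥ 1`,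
`E[‖Yᵢ - Zᵢ‖₁] ≤ K * max_{1≤j≤i} E[‖D(Yⱼ,Yⱼ₋₁,Aⱼ) - D(Zⱼ,Zⱼ₋₁,Aⱼ)‖₁]`
with `K = (exp (L*T) - 1)/L` and `T = i*h`. -/
theorem euler_zero_stability {Ω : Type*} [MeasureSpace Ω]
    [IsProbabilityMeasure (ℙ : Measure Ω)]
    {α : Type*} [MeasurableSpace α] (n : ℕ) (h L : ℝ) (hh : 0 < h) (hL : 0 < L)
    (A : ℕ → Ω → α)
    (hAmeas : ∀ i : ℕ, Measurable (A (i + 1)))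
    (hAindep : iIndepFun (fun i : ℕ => A (i + 1)) ℙ)
    (hAident : ∀ i : ℕ, Measure.map (A (i + 1)) ℙ = Measure.map (A 1) ℙ)
    (ℱ : Filtration ℕ (inferInstance : MeasurableSpace Ω))
    (hℱ : ∀ i : ℕ, ℱ i = ⨆ j ∈ Finset.Icc 1 i, MeasurableSpace.comap (A j) inferInstance)
    (f : (Fin n → Bool) → α → Fin n → ℝ)
    (hfmeas : ∀ x, Measurable (f x))
    (hfint : ∀ x, Integrable (fun ω => f x (A 1 ω)) ℙ)
    (hfLip : ∀ x z : Fin n → Bool,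
      ∫ ω, ∑ p : Fin n, |f x (A 1 ω) p - f z (A 1 ω) p| ∂ℙ ≤
        L * ∑ p : Fin n, |boolToR (x p) - boolToR (z p)|)
    (Y Z : ℕ → Ω → Fin n → Bool)
    (hYadapted : ∀ i : ℕ, Measurable[ℱ i] (Y i))
    (hZadapted : ∀ i : ℕ, Measurable[ℱ i] (Z i))
    (hYZ0 : Y 0 = Z 0) :
    ∀ i : ℕ, ∀ hi : 1 ≤ i,
      ∫ ω, ∑ p : Fin n, |boolToR (Y i ω p) - boolToR (Z i ω p)| ∂ℙ ≤
        ((Real.exp (L * ((i : ℝ) * h)) - 1) / L) *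
          (Finset.Icc 1 i).sup' (Finset.nonempty_Icc.mpr hi) (fun j =>
            ∫ ω, ∑ p : Fin n,
              |eulerD h f (Y j ω) (Y (j - 1) ω) (A j ω) p -
                eulerD h f (Z j ω) (Z (j - 1) ω) (A j ω) p| ∂ℙ) := by
  classical
  have hYm : ∀ k, Measurable (Y k) := fun k => (hYadapted k).mono (ℱ.le k) le_rfl
  have hZm : ∀ k, Measurable (Z k) := fun k => (hZadapted k).mono (ℱ.le k) le_rfl
  have hAm : ∀ j, 1 ≤ j → Measurable (A j) := by
    intro j hj; have := hAmeas (j - 1); rwa [Nat.sub_add_cancel hj] at this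
  have hident : ∀ j, 1 ≤ j → Measure.map (A j) ℙ = Measure.map (A 1) ℙ := by
    intro j hj; have := hAident (j - 1); rwa [Nat.sub_add_cancel hj] at this
  -- bounded measurable real functions are integrable
  have hbdd_int : ∀ (g : Ω → ℝ), Measurable g → (∀ ω, |g ω| ≤ 1) → Integrable g ℙ := by
    intro g hg hb
    refine Integrable.mono' (integrable_const (1:ℝ)) hg.aestronglyMeasurable ?_
    exact ae_of_all _ fun ω => by simpa [Real.norm_eq_abs] using hb ω
  -- boolToR components
  have hbY : ∀ k (p : Fin n), Measurable (fun ω => boolToR (Y k ω p)) := fun k p =>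
    (measurable_of_countable boolToR).comp ((measurable_pi_apply p).comp (hYm k))
  have hbZ : ∀ k (p : Fin n), Measurable (fun ω => boolToR (Z k ω p)) := fun k p =>
    (measurable_of_countable boolToR).comp ((measurable_pi_apply p).comp (hZm k))
  have hbool_abs : ∀ a b : Bool, |boolToR a - boolToR b| ≤ 1 := by
    intro a b; cases a <;> cases b <;> norm_num [boolToR]
  have hbYint : ∀ k (p : Fin n), Integrable (fun ω => boolToR (Y k ω p)) ℙ := by
    intro k p
    refine hbdd_int _ (hbY k p) fun ω => ?_
    cases hc : Y k ω p <;> norm_num [boolToR]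
  have hbZint : ∀ k (p : Fin n), Integrable (fun ω => boolToR (Z k ω p)) ℙ := by
    intro k p
    refine hbdd_int _ (hbZ k p) fun ω => ?_
    cases hc : Z k ω p <;> norm_num [boolToR]
  -- the "error" integrands
  have hEmeas : ∀ k, Measurable (fun ω => ∑ p : Fin n,
      |boolToR (Y k ω p) - boolToR (Z k ω p)|) := by
    intro k
    exact Finset.measurable_sum _ fun p _ => ((hbY k p).sub (hbZ k p)).abs
  have hEint : ∀ k, Integrable (fun ω => ∑ p : Fin n,
      |boolToR (Y k ω p) - boolToR (Z k ω p)|) ℙ := by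
    intro k
    exact integrable_finset_sum _ fun p _ => ((hbYint k p).sub (hbZint k p)).abs
  -- integrability of f x ∘ A j
  have hfintj : ∀ (x : Fin n → Bool) j, 1 ≤ j → Integrable (fun ω => f x (A j ω)) ℙ := by
    intro x j hj
    have h1 : Integrable (f x) (Measure.map (A 1) ℙ) :=
      (integrable_map_measure (hfmeas x).aestronglyMeasurable
        (hAm 1 le_rfl).aemeasurable).mpr (hfint x)
    have h2 : Integrable (f x) (Measure.map (A j) ℙ) := (hident j hj) ▸ h1
    exact (integrable_map_measure (hfmeas x).aestronglyMeasurable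
      (hAm j hj).aemeasurable).mp h2
  have hfcomp : ∀ (x : Fin n → Bool) j, 1 ≤ j → ∀ p : Fin n,
      Integrable (fun ω => f x (A j ω) p) ℙ := by
    intro x j hj p
    refine Integrable.mono' (hfintj x j hj).norm
      (((measurable_pi_apply p).comp ((hfmeas x).comp (hAm j hj))).aestronglyMeasurable) ?_
    exact ae_of_all _ fun ω => norm_le_pi_norm (f x (A j ω)) p
  -- transfer integrals along identical distribution
  have htransfer : ∀ (g : α → ℝ), Measurable g → ∀ j, 1 ≤ j →
      ∫ ω, g (A j ω) ∂ℙ = ∫ ω, g (A 1 ω) ∂ℙ := by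
    intro g hg j hj
    rw [← integral_map (hAm j hj).aemeasurable hg.aestronglyMeasurable,
        ← integral_map (hAm 1 le_rfl).aemeasurable hg.aestronglyMeasurable, hident j hj]
  -- independence of ℱ (j-1) and A j
  have hIndepSig : ∀ j, 1 ≤ j →
      Indep (ℱ (j - 1)) (MeasurableSpace.comap (A j) inferInstance) ℙ := by
    intro j hj
    have H := indep_biSup_compl (fun i => (hAmeas i).comap_le) hAindep.iIndep
      (Set.Iio (j - 1))
    refine indep_of_indep_of_le_right (indep_of_indep_of_le_left H ?_) ?_
    · rw [hℱ]
      refine iSup₂_le fun k hk => ?_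
      rw [Finset.mem_Icc] at hk
      refine le_iSup₂_of_le (k - 1) (Set.mem_Iio.mpr (by omega)) ?_
      exact le_of_eq (by rw [Nat.sub_add_cancel hk.1])
    · refine le_iSup₂_of_le (j - 1) (by simp) ?_
      exact le_of_eq (by rw [Nat.sub_add_cancel hj])
  -- abbreviations
  set e : ℕ → ℝ := fun k =>
    ∫ ω, ∑ p : Fin n, |boolToR (Y k ω p) - boolToR (Z k ω p)| ∂ℙ with he_def
  set d : ℕ → ℝ := fun j =>
    ∫ ω, ∑ p : Fin n,
      |eulerD h f (Y j ω) (Y (j - 1) ω) (A j ω) p -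
        eulerD h f (Z j ω) (Z (j - 1) ω) (A j ω) p| ∂ℙ with hd_def
  have he0 : e 0 = 0 := by
    simp only [he_def, hYZ0, sub_self, abs_zero, Finset.sum_const_zero, integral_zero]
  have hdnn : ∀ j, 0 ≤ d j := by
    intro j
    exact integral_nonneg fun ω => Finset.sum_nonneg fun p _ => abs_nonneg _
  -- the key recurrence
  have hrec : ∀ j, 1 ≤ j → e j ≤ (1 + L * h) * e (j - 1) + h * d j := by
    intro j hj
    set W : Ω → (Fin n → Bool) × (Fin n → Bool) := fun ω => (Y (j - 1) ω, Z (j - 1) ω)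
      with hW_def
    have hWm : Measurable W := (hYm (j - 1)).prodMk (hZm (j - 1))
    set φ : ((Fin n → Bool) × (Fin n → Bool)) → α → ℝ :=
      fun w a => ∑ p : Fin n, |f w.1 a p - f w.2 a p| with hφ_def
    have hφm : ∀ w, Measurable (φ w) := fun w =>
      Finset.measurable_sum _ fun p _ =>
        (((measurable_pi_apply p).comp (hfmeas w.1)).sub
          ((measurable_pi_apply p).comp (hfmeas w.2))).abs
    have hφint : ∀ w, Integrable (fun ω => φ w (A j ω)) ℙ := fun w =>
      integrable_finset_sum _ fun p _ =>
        ((hfcomp w.1 j hj p).sub (hfcomp w.2 j hj p)).abs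
    have hIf_int : Integrable (fun ω => ∑ p : Fin n,
        |f (Y (j - 1) ω) (A j ω) p - f (Z (j - 1) ω) (A j ω) p|) ℙ := by
      have := aux_decomp_integrable W hWm (fun w ω => φ w (A j ω)) hφint
      simpa [hφ_def, hW_def] using this
    have hfYcomp : ∀ p : Fin n, Integrable (fun ω => f (Y (j - 1) ω) (A j ω) p) ℙ := by
      intro p
      have := aux_decomp_integrable W hWm (fun w ω => f w.1 (A j ω) p)
        (fun w => hfcomp w.1 j hj p)
      simpa [hW_def] using this
    have hfZcomp : ∀ p : Fin n, Integrable (fun ω => f (Z (j - 1) ω) (A j ω) p) ℙ := by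
      intro p
      have := aux_decomp_integrable W hWm (fun w ω => f w.2 (A j ω) p)
        (fun w => hfcomp w.2 j hj p)
      simpa [hW_def] using this
    have hD_int : Integrable (fun ω => ∑ p : Fin n,
        |eulerD h f (Y j ω) (Y (j - 1) ω) (A j ω) p -
          eulerD h f (Z j ω) (Z (j - 1) ω) (A j ω) p|) ℙ := by
      refine integrable_finset_sum _ fun p _ => Integrable.abs ?_
      have h1 : Integrable (fun ω => eulerD h f (Y j ω) (Y (j - 1) ω) (A j ω) p) ℙ := by
        simp only [eulerD]
        exact (((hbYint j p).sub (hbYint (j - 1) p)).div_const h).sub (hfYcomp p)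
      have h2 : Integrable (fun ω => eulerD h f (Z j ω) (Z (j - 1) ω) (A j ω) p) ℙ := by
        simp only [eulerD]
        exact (((hbZint j p).sub (hbZint (j - 1) p)).div_const h).sub (hfZcomp p)
      exact h1.sub h2
    have hpt : ∀ ω, ∑ p : Fin n, |boolToR (Y j ω p) - boolToR (Z j ω p)| ≤
        (∑ p : Fin n, |boolToR (Y (j - 1) ω p) - boolToR (Z (j - 1) ω p)|) +
        (h * ∑ p : Fin n, |f (Y (j - 1) ω) (A j ω) p - f (Z (j - 1) ω) (A j ω) p| +
         h * ∑ p : Fin n, |eulerD h f (Y j ω) (Y (j - 1) ω) (A j ω) p -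
              eulerD h f (Z j ω) (Z (j - 1) ω) (A j ω) p|) := by
      intro ω
      rw [Finset.mul_sum, Finset.mul_sum, ← Finset.sum_add_distrib,
        ← Finset.sum_add_distrib]
      refine Finset.sum_le_sum fun p _ => ?_
      have key : boolToR (Y j ω p) - boolToR (Z j ω p)
          = (boolToR (Y (j - 1) ω p) - boolToR (Z (j - 1) ω p))
            + (h * (f (Y (j - 1) ω) (A j ω) p - f (Z (j - 1) ω) (A j ω) p)
            + h * (eulerD h f (Y j ω) (Y (j - 1) ω) (A j ω) p -
                eulerD h f (Z j ω) (Z (j - 1) ω) (A j ω) p)) := by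
        simp only [eulerD]
        field_simp
        ring
      calc |boolToR (Y j ω p) - boolToR (Z j ω p)|
          = |(boolToR (Y (j - 1) ω p) - boolToR (Z (j - 1) ω p))
            + (h * (f (Y (j - 1) ω) (A j ω) p - f (Z (j - 1) ω) (A j ω) p)
            + h * (eulerD h f (Y j ω) (Y (j - 1) ω) (A j ω) p -
                eulerD h f (Z j ω) (Z (j - 1) ω) (A j ω) p))| := by rw [← key]
        _ ≤ |boolToR (Y (j - 1) ω p) - boolToR (Z (j - 1) ω p)|
            + (|h * (f (Y (j - 1) ω) (A j ω) p - f (Z (j - 1) ω) (A j ω) p)|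
            + |h * (eulerD h f (Y j ω) (Y (j - 1) ω) (A j ω) p -
                eulerD h f (Z j ω) (Z (j - 1) ω) (A j ω) p)|) :=
          (abs_add_le _ _).trans (by gcongr; exact abs_add_le _ _)
        _ = |boolToR (Y (j - 1) ω p) - boolToR (Z (j - 1) ω p)|
            + (h * |f (Y (j - 1) ω) (A j ω) p - f (Z (j - 1) ω) (A j ω) p|
            + h * |eulerD h f (Y j ω) (Y (j - 1) ω) (A j ω) p -
                eulerD h f (Z j ω) (Z (j - 1) ω) (A j ω) p|) := by
          rw [abs_mul, abs_mul, abs_of_pos hh]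
    have hint := integral_mono (hEint j)
      ((hEint (j - 1)).add ((hIf_int.const_mul h).add (hD_int.const_mul h))) hpt
    have heq : ∫ ω, ((∑ p : Fin n, |boolToR (Y (j - 1) ω p) - boolToR (Z (j - 1) ω p)|) +
        (h * ∑ p : Fin n, |f (Y (j - 1) ω) (A j ω) p - f (Z (j - 1) ω) (A j ω) p| +
         h * ∑ p : Fin n, |eulerD h f (Y j ω) (Y (j - 1) ω) (A j ω) p -
              eulerD h f (Z j ω) (Z (j - 1) ω) (A j ω) p|)) ∂ℙ
        = e (j - 1) + (h * (∫ ω, ∑ p : Fin n,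
            |f (Y (j - 1) ω) (A j ω) p - f (Z (j - 1) ω) (A j ω) p| ∂ℙ) + h * d j) := by
      have hg2 : Integrable (fun ω =>
          h * ∑ p : Fin n, |f (Y (j - 1) ω) (A j ω) p - f (Z (j - 1) ω) (A j ω) p| +
          h * ∑ p : Fin n, |eulerD h f (Y j ω) (Y (j - 1) ω) (A j ω) p -
              eulerD h f (Z j ω) (Z (j - 1) ω) (A j ω) p|) ℙ :=
        (hIf_int.const_mul h).add (hD_int.const_mul h)
      rw [integral_add (hEint (j - 1)) hg2,
          integral_add (hIf_int.const_mul h) (hD_int.const_mul h),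
          integral_const_mul, integral_const_mul]
    have hstepB : ∫ ω, ∑ p : Fin n,
        |f (Y (j - 1) ω) (A j ω) p - f (Z (j - 1) ω) (A j ω) p| ∂ℙ ≤ L * e (j - 1) := by
      have hWF : Measurable[ℱ (j - 1)] W :=
        Measurable.prodMk (hYadapted (j - 1)) (hZadapted (j - 1))
      have hIWA : IndepFun W (A j) ℙ := by
        rw [IndepFun_iff_Indep]
        exact indep_of_indep_of_le_left (hIndepSig j hj) hWF.comap_le
      have hdecL := aux_decomp_integral W hWm (fun w ω => φ w (A j ω)) hφint
      have hterm : ∀ w : (Fin n → Bool) × (Fin n → Bool),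
          ∫ ω, (if W ω = w then (1:ℝ) else 0) * φ w (A j ω) ∂ℙ
          = (ℙ (W ⁻¹' {w})).toReal * ∫ ω, φ w (A 1 ω) ∂ℙ := by
        intro w
        have hIWφ : IndepFun W (fun ω => φ w (A j ω)) ℙ :=
          hIWA.comp measurable_id (hφm w)
        have hvm : Measurable (fun ω => φ w (A j ω)) := (hφm w).comp (hAm j hj)
        rw [aux_ind_integral W hWm w hvm.aestronglyMeasurable hIWφ,
          htransfer (φ w) (hφm w) j hj]
      have heW : e (j - 1) = ∑ w : (Fin n → Bool) × (Fin n → Bool),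
          (ℙ (W ⁻¹' {w})).toReal *
            ∑ p : Fin n, |boolToR (w.1 p) - boolToR (w.2 p)| := by
        have hdecE := aux_decomp_integral W hWm
          (fun w _ => ∑ p : Fin n, |boolToR (w.1 p) - boolToR (w.2 p)|)
          (fun w => integrable_const _)
        have hlhs : e (j - 1) = ∫ ω, ∑ p : Fin n,
            |boolToR ((W ω).1 p) - boolToR ((W ω).2 p)| ∂ℙ := by
          simp only [hW_def]
          rfl
        rw [hlhs, hdecE]
        refine Finset.sum_congr rfl fun w _ => ?_
        rw [integral_mul_const, aux_ind_eval W hWm w]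
      calc ∫ ω, ∑ p : Fin n,
            |f (Y (j - 1) ω) (A j ω) p - f (Z (j - 1) ω) (A j ω) p| ∂ℙ
          = ∑ w : (Fin n → Bool) × (Fin n → Bool),
            ∫ ω, (if W ω = w then (1:ℝ) else 0) * φ w (A j ω) ∂ℙ := by
            rw [← hdecL]
        _ = ∑ w : (Fin n → Bool) × (Fin n → Bool),
            (ℙ (W ⁻¹' {w})).toReal * ∫ ω, φ w (A 1 ω) ∂ℙ :=
          Finset.sum_congr rfl fun w _ => hterm w
        _ ≤ ∑ w : (Fin n → Bool) × (Fin n → Bool),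
            (ℙ (W ⁻¹' {w})).toReal *
              (L * ∑ p : Fin n, |boolToR (w.1 p) - boolToR (w.2 p)|) := by
            refine Finset.sum_le_sum fun w _ => ?_
            refine mul_le_mul_of_nonneg_left ?_ ENNReal.toReal_nonneg
            simpa [hφ_def] using hfLip w.1 w.2
        _ = L * ∑ w : (Fin n → Bool) × (Fin n → Bool),
            (ℙ (W ⁻¹' {w})).toReal *
              ∑ p : Fin n, |boolToR (w.1 p) - boolToR (w.2 p)| := by
            rw [Finset.mul_sum]
            exact Finset.sum_congr rfl fun w _ => by ring
        _ = L * e (j - 1) := by rw [← heW]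
    calc e j ≤ _ := hint
      _ = e (j - 1) + (h * (∫ ω, ∑ p : Fin n,
            |f (Y (j - 1) ω) (A j ω) p - f (Z (j - 1) ω) (A j ω) p| ∂ℙ) + h * d j) := heq
      _ ≤ e (j - 1) + (h * (L * e (j - 1)) + h * d j) := by
          refine add_le_add_right (add_le_add_left ?_ _) _
          exact mul_le_mul_of_nonneg_left hstepB hh.le
      _ = (1 + L * h) * e (j - 1) + h * d j := by ring
  -- discrete Gronwall
  have hmain : ∀ i, ∀ hi : 1 ≤ i, e i ≤ (((1 + L * h) ^ i - 1) / L) *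
      (Finset.Icc 1 i).sup' (Finset.nonempty_Icc.mpr hi) d := by
    intro i hi
    induction i, hi using Nat.le_induction with
    | base =>
      have hr := hrec 1 le_rfl
      norm_num at hr
      rw [he0] at hr
      calc e 1 ≤ (1 + L * h) * 0 + h * d 1 := hr
        _ = h * d 1 := by ring
        _ = (((1 + L * h) ^ 1 - 1) / L) * d 1 := by
            rw [pow_one]
            field_simp
            ring
        _ = (((1 + L * h) ^ 1 - 1) / L) *
            (Finset.Icc 1 1).sup' (Finset.nonempty_Icc.mpr le_rfl) d := by
            have hs : (Finset.Icc 1 1).sup' (Finset.nonempty_Icc.mpr le_rfl) d = d 1 := by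
              refine le_antisymm ?_ (Finset.le_sup' d (by simp))
              refine Finset.sup'_le _ _ fun j hj => ?_
              rw [Finset.mem_Icc] at hj
              have hj1 : j = 1 := by omega
              rw [hj1]
            rw [hs]
    | succ i hi1 IH =>
      have hM' : (Finset.Icc 1 i).sup' (Finset.nonempty_Icc.mpr hi1) d ≤
          (Finset.Icc 1 (i + 1)).sup' (Finset.nonempty_Icc.mpr (by omega)) d :=
        Finset.sup'_mono d (Finset.Icc_subset_Icc_right (Nat.le_succ i)) _
      have hdM : d (i + 1) ≤
          (Finset.Icc 1 (i + 1)).sup' (Finset.nonempty_Icc.mpr (by omega)) d :=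
        Finset.le_sup' d (Finset.mem_Icc.mpr ⟨by omega, le_rfl⟩)
      have hMnn : (0:ℝ) ≤
          (Finset.Icc 1 (i + 1)).sup' (Finset.nonempty_Icc.mpr (by omega)) d :=
        le_trans (hdnn (i + 1)) hdM
      have h1p : (0:ℝ) ≤ 1 + L * h := by positivity
      have hKnn : (0:ℝ) ≤ ((1 + L * h) ^ i - 1) / L := by
        apply div_nonneg _ hL.le
        have h1 : (1:ℝ) ≤ (1 + L * h) ^ i := one_le_pow₀ (by nlinarith)
        linarith
      have hrec' := hrec (i + 1) (by omega)
      rw [Nat.add_sub_cancel] at hrec'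
      calc e (i + 1) ≤ (1 + L * h) * e i + h * d (i + 1) := hrec'
        _ ≤ (1 + L * h) * (((1 + L * h) ^ i - 1) / L *
              ((Finset.Icc 1 (i + 1)).sup' (Finset.nonempty_Icc.mpr (by omega)) d))
            + h * ((Finset.Icc 1 (i + 1)).sup' (Finset.nonempty_Icc.mpr (by omega)) d) := by
            refine add_le_add ?_ (mul_le_mul_of_nonneg_left hdM hh.le)
            refine mul_le_mul_of_nonneg_left (IH.trans ?_) h1p
            exact mul_le_mul_of_nonneg_left hM' hKnn
        _ = (((1 + L * h) ^ (i + 1) - 1) / L) *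
            ((Finset.Icc 1 (i + 1)).sup' (Finset.nonempty_Icc.mpr (by omega)) d) := by
            field_simp
            ring
  -- conclusion
  intro i hi
  have hK : ((1 + L * h) ^ i - 1) / L ≤ (Real.exp (L * ((i : ℝ) * h)) - 1) / L := by
    have hpow : (1 + L * h) ^ i ≤ Real.exp (L * ((i : ℝ) * h)) := by
      have h1 : (1 + L * h) ≤ Real.exp (L * h) := by
        have := Real.add_one_le_exp (L * h); linarith
      have h2 : (1 + L * h) ^ i ≤ (Real.exp (L * h)) ^ i :=
        pow_le_pow_left₀ (by positivity) h1 i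
      have h3 : (Real.exp (L * h)) ^ i = Real.exp ((i : ℝ) * (L * h)) :=
        (Real.exp_nat_mul _ i).symm
      have h4 : (i : ℝ) * (L * h) = L * ((i : ℝ) * h) := by ring
      rw [h3, h4] at h2
      exact h2
    exact (div_le_div_iff_of_pos_right hL).mpr (by linarith)
  have hsupnn : (0:ℝ) ≤ (Finset.Icc 1 i).sup' (Finset.nonempty_Icc.mpr hi) d :=
    le_trans (hdnn 1) (Finset.le_sup' d (Finset.mem_Icc.mpr ⟨le_rfl, hi⟩))
  exact (hmain i hi).trans (mul_le_mul_of_nonneg_right hK hsupnn)
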